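/- arXiv:2011.13396 — 3 statements merged into one kernel-verified Lean document; each statement's English description precedes it below -/
import Mathlib

section
/- If the i-th statement in a straight-line trace is downward exposed (no succeeding statement assigns to its left-hand side variable), then in every state produced by backward-executing statements s_n down to s_{i+1} from the postcondition, the value of that variable equals its value in the postcondition. -/
/-- An assignment statement over variables `V` valued in `D`. -/
structure Stmt (V D : Type) where
  lhs : V
  rhs : (V → D) → D

/-- Backward execution ∇ of a suffix of a trace, processing statements from the
last one down to the first one of the suffix.  The input list is the suffix in
*reversed* order (head = last statement, processed first).  A statement whose
left-hand side is downward exposed relative to the remaining statements keeps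
the variable's value (the state is preserved); otherwise the state is split by
assigning the variable every possible value. -/
def backAux {V D : Type} [DecidableEq V] : List (Stmt V D) → (V → D) → Set (V → D)
  | [], σ => {σ}
  | s :: rest, σ =>
    if ∀ u ∈ rest, u.lhs ≠ s.lhs then
      backAux rest σ
    else
      ⋃ d : D, backAux rest (Function.update σ s.lhs d)

/-- Backward execution of a suffix `L` (given in program order) from a state. -/
def backRun {V D : Type} [DecidableEq V] (L : List (Stmt V D)) (σ : V → D) :
    Set (V → D) :=
  backAux L.reverse σ


theorem backAux_eq_of_not_lhs {V D : Type} [DecidableEq V]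
    (x : V) : ∀ (L : List (Stmt V D)) (σ : V → D),
    (∀ s ∈ L, s.lhs ≠ x) → ∀ τ ∈ backAux L σ, τ x = σ x := by
  intro L
  induction L with
  | nil => intro σ _ τ hτ; simp [backAux] at hτ; simp [hτ]
  | cons s rest ih =>
    intro σ h τ hτ
    simp only [backAux] at hτ
    split at hτ
    · exact ih σ (fun u hu => h u (List.mem_cons_of_mem _ hu)) τ hτ
    · simp only [Set.mem_iUnion] at hτ
      obtain ⟨d, hd⟩ := hτ
      rw [ih _ (fun u hu => h u (List.mem_cons_of_mem _ hu)) τ hd]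
      exact Function.update_of_ne (Ne.symm (h s List.mem_cons_self)) _ _

/-- if the i-th statement is downward exposed (no succeeding
statement assigns to its left-hand side variable), then in every state produced
by backward-executing the statements s_n down to s_{i+1} from the
postcondition, the value of that variable equals its value in the
postcondition. -/
theorem downward_exposed_value_eq_post {V D : Type} [DecidableEq V]
    (t : List (Stmt V D)) (i : ℕ) (hi : i < t.length) (post : V → D)
    (hdown : ∀ s ∈ t.drop (i + 1), s.lhs ≠ (t.get ⟨i, hi⟩).lhs) :
    ∀ τ ∈ backRun (t.drop (i + 1)) post,
      τ (t.get ⟨i, hi⟩).lhs = post (t.get ⟨i, hi⟩).lhs := by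
  intro τ hτ
  exact backAux_eq_of_not_lhs _ _ post
    (fun u hu => hdown u (List.mem_reverse.mp hu)) τ hτ
end

section
/- In a trace whose statements are pairwise semantically independent (left-hand side variables are distinct and no right-hand side reads a variable assigned by another statement), if exactly one statement s_i is buggy (its forward semantics differ from the correct semantics on the precondition-reachable state), then the per-position difference between the forward execution of the buggy trace and the forward execution of the correct trace is zero at positions 0,...,i−1 and equals exactly 1 (the single disagreeing variable) at positions i,...,n. -/
def exec {V D : Type} [DecidableEq V] (s : Stmt V D) (σ : V → D) : V → D :=
  Function.update σ s.lhs (s.rhs σ)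

/-- Forward execution from a precondition. -/
def run {V D : Type} [DecidableEq V] (σ : V → D) (t : List (Stmt V D)) : V → D :=
  t.foldl (fun σ s => exec s σ) σ

/-- The difference between two states: the number of variables on which they
disagree. -/
def diff {V D : Type} [Fintype V] [DecidableEq D] (σ τ : V → D) : ℕ :=
  (Finset.univ.filter fun v => σ v ≠ τ v).card

/-- `s` reads variable `x` if its right-hand side can depend on `x`. -/
def Reads {V D : Type} [DecidableEq V] (s : Stmt V D) (x : V) : Prop :=
  ∃ (σ : V → D) (d : D), s.rhs (Function.update σ x d) ≠ s.rhs σ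

/-- in a trace of pairwise semantically independent statements
(distinct left-hand sides and no right-hand side reads a variable assigned by
another statement), if exactly one statement s_i is buggy (its forward
semantics differ from the correct one on the precondition-reachable state),
then the per-position difference between the forward executions of the buggy
and correct traces is 0 at positions 0,…,i and exactly 1 at positions
i+1,…,n (0-indexed statements: the buggy statement executes between
positions i and i+1). -/
theorem single_bug_independent_diff {V D : Type} [DecidableEq V] [Fintype V] [DecidableEq D]
    (P Q : List (Stmt V D)) (pre : V → D) (i : ℕ)
    (hlen : P.length = Q.length) (hi : i < P.length)
    (heq : ∀ (j : ℕ) (hj : j < P.length), j ≠ i → P[j] = Q[j]'(by omega))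
    (hlhs : (P[i]'hi).lhs = (Q[i]'(by omega)).lhs)
    (hnodupP : (P.map Stmt.lhs).Nodup) (hnodupQ : (Q.map Stmt.lhs).Nodup)
    (hindP : ∀ (j k : ℕ) (hj : j < P.length) (hk : k < P.length), j ≠ k →
      ¬ Reads (P[j]'hj) ((P[k]'hk).lhs))
    (hindQ : ∀ (j k : ℕ) (hj : j < Q.length) (hk : k < Q.length), j ≠ k →
      ¬ Reads (Q[j]'hj) ((Q[k]'hk).lhs))
    (hbug : (P[i]'hi).rhs (run pre (P.take i)) ≠ (Q[i]'(by omega)).rhs (run pre (Q.take i))) :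
    ∀ m ≤ P.length,
      (m ≤ i → diff (run pre (P.take m)) (run pre (Q.take m)) = 0) ∧
      (i < m → diff (run pre (P.take m)) (run pre (Q.take m)) = 1) := by

  intro m hm
  set x := (P[i]'hi).lhs with hx
  -- for k ≤ i, prefixes agree
  have htake : ∀ k ≤ i, P.take k = Q.take k := by
    intro k hk
    apply List.ext_getElem
    · simp [hlen]
    · intro j h1 h2
      simp only [List.getElem_take]
      exact heq j (by simp at h1; omega) (by simp at h1; omega)
  have hstep : ∀ (l : List (Stmt V D)) (k : ℕ) (hk : k < l.length),
      run pre (l.take (k+1)) = exec (l[k]'hk) (run pre (l.take k)) := by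
    intro l k hk
    rw [List.take_succ, List.getElem?_eq_getElem hk]
    show run pre (_ ++ [_]) = _
    rw [run, List.foldl_append]
    rfl
  -- key invariant for k > i
  have key : ∀ k, i < k → k ≤ P.length →
      (∀ v, v ≠ x → run pre (P.take k) v = run pre (Q.take k) v) ∧
      run pre (P.take k) x ≠ run pre (Q.take k) x := by
    intro k
    induction k with
    | zero => omega
    | succ k ih =>
      intro hik hk
      by_cases hki : k = i
      · subst hki
        rw [hstep P k hi, hstep Q k (by omega)]
        have hq : run pre (P.take k) = run pre (Q.take k) := by rw [htake k le_rfl]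
        constructor
        · intro v hv
          simp only [exec, Function.update]
          have hv2 : v ≠ (Q[k]'(by omega)).lhs := by rw [← hlhs]; exact hv
          simp [hv, hv2, hq, show v ≠ (P[k]'hi).lhs from hv]
        · simp only [exec, Function.update]
          simp [← hlhs, hq] at hbug ⊢
          rw [if_pos hx]; exact hbug
      · have hik' : i < k := by omega
        have hk' : k < P.length := by omega
        obtain ⟨ih1, ih2⟩ := ih hik' (by omega)
        have hPQ : P[k]'hk' = Q[k]'(by omega) := heq k hk' hki
        have hlhsne : (P[k]'hk').lhs ≠ x := by
          intro hcon
          have := List.Nodup.getElem_inj_iff (l := P.map Stmt.lhs) hnodupP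
            (i := k) (j := i) (hi := by simpa using hk') (hj := by simpa using hi)
          simp only [List.getElem_map] at this
          exact hki (this.mp (by rw [hcon, hx]))
        have hnoread : ∀ (σ : V → D) (d : D),
            (P[k]'hk').rhs (Function.update σ x d) = (P[k]'hk').rhs σ := by
          have := hindP k i hk' hi hki
          rw [Reads] at this
          push_neg at this
          exact this
        set σP := run pre (P.take k)
        set σQ := run pre (Q.take k)
        have hupd : σP = Function.update σQ x (σP x) := by
          funext v
          by_cases hv : v = x
          · simp [hv, Function.update]
          · simp [Function.update, hv, ih1 v hv]
        have hrhs : (P[k]'hk').rhs σP = (P[k]'hk').rhs σQ := by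
          rw [hupd]; exact hnoread σQ (σP x)
        rw [hstep P k hk', hstep Q k (by omega), ← hPQ]
        constructor
        · intro v hv
          simp only [exec, Function.update]
          by_cases hvl : v = (P[k]'hk').lhs
          · simp [hvl, hrhs]; exact hrhs
          · simp only [hvl, if_false]
            exact ih1 v hv
        · simp only [exec, Function.update]
          simp [Ne.symm hlhsne]
          exact ih2
  constructor
  · intro hmi
    have : run pre (P.take m) = run pre (Q.take m) := by rw [htake m hmi]
    simp [diff, this]
  · intro him
    obtain ⟨k1, k2⟩ := key m him hm
    have hset : (Finset.univ.filter fun v => run pre (P.take m) v ≠ run pre (Q.take m) v)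
        = {x} := by
      ext v
      simp only [Finset.mem_filter, Finset.mem_univ, true_and, Finset.mem_singleton]
      constructor
      · intro hne
        by_contra hvx
        exact hne (k1 v hvx)
      · intro hvx; subst hvx; exact k2
    rw [diff, hset, Finset.card_singleton]
end

section
/- If a state sequence t (length m+1) is obtained by forward execution of a straight-line trace and every statement writes exactly one variable, then consecutive states differ in at most one variable; hence the differential trace between t and any fixed reference state has gradient at most 1 at every position. -/
lemma diff_eq_hamming {V D : Type} [Fintype V] [DecidableEq D] (σ τ : V → D) :
    diff σ τ = hammingDist σ τ := rfl

lemma diff_exec_le_one {V D : Type} [DecidableEq V] [Fintype V] [DecidableEq D]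
    (s : Stmt V D) (σ : V → D) : diff σ (exec s σ) ≤ 1 := by
  have h : (Finset.univ.filter fun v => σ v ≠ exec s σ v) ⊆ {s.lhs} := by
    intro v hv
    simp only [Finset.mem_filter, Finset.mem_singleton] at *
    by_contra hne
    have : exec s σ v = σ v := by simp [exec, Function.update_of_ne hne]
    exact hv.2 this.symm
  calc diff σ (exec s σ) ≤ ({s.lhs} : Finset V).card := Finset.card_le_card h
    _ = 1 := Finset.card_singleton _

lemma diff_triangle {V D : Type} [Fintype V] [DecidableEq D] (σ τ ρ : V → D) :
    diff σ ρ ≤ diff σ τ + diff τ ρ := by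
  simpa [diff_eq_hamming] using hammingDist_triangle σ τ ρ

/-- in a forward execution of a straight-line trace where every
statement writes exactly one variable, consecutive states differ in at most one
variable; hence the differential trace against any fixed reference state has
gradient at most 1 at every position. -/
theorem consecutive_states_diff_le_one {V D : Type} [DecidableEq V] [Fintype V] [DecidableEq D]
    (t : List (Stmt V D)) (pre : V → D) :
    ∀ (k : ℕ), k < t.length →
      diff (run pre (t.take k)) (run pre (t.take (k + 1))) ≤ 1 ∧
      ∀ ref : V → D,
        Nat.dist (diff (run pre (t.take k)) ref) (diff (run pre (t.take (k + 1))) ref) ≤ 1 := by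
  intro k hk
  have hstep : run pre (t.take (k + 1)) = exec (t.get ⟨k, hk⟩) (run pre (t.take k)) := by
    have : t.take (k + 1) = t.take k ++ [t.get ⟨k, hk⟩] := by
      rw [List.take_succ]
      simp [List.getElem?_eq_getElem hk]
    rw [this, run, List.foldl_append]
    rfl
  set σ := run pre (t.take k)
  set τ := run pre (t.take (k + 1))
  have h1 : diff σ τ ≤ 1 := hstep ▸ diff_exec_le_one _ _
  refine ⟨h1, fun ref => ?_⟩
  have hsym : diff τ σ = diff σ τ := by
    simp [diff_eq_hamming, hammingDist_comm]
  rw [Nat.dist]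
  have a := diff_triangle σ τ ref
  have b := diff_triangle τ σ ref
  omega
end
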